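/- arXiv:1611.03224 — 8 statements merged into one kernel-verified Lean document; each statement's English description precedes it below -/
import Mathlib

section
/- If a sequence x in a normed linear space X is I-statistically convergent to ξ with roughness degree r ≥ 0 (i.e., rough I-statistically convergent), then the diameter of the set of all rough I-statistical limits of x is at most 2r. -/
open scoped Classical

/-- `I` is a nontrivial admissible ideal on `ℕ`. -/
def IsAdmissibleIdeal (I : Set (Set ℕ)) : Prop :=
  (∅ : Set ℕ) ∈ I ∧ (Set.univ : Set ℕ) ∉ I ∧
  (∀ A B : Set ℕ, A ∈ I → B ∈ I → A ∪ B ∈ I) ∧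
  (∀ A B : Set ℕ, A ∈ I → B ⊆ A → B ∈ I) ∧
  (∀ n : ℕ, ({n} : Set ℕ) ∈ I)

/-- `(1/n) * |{k ≤ n : P k}|` (indices `k` running over `1,…,n`). -/
noncomputable def stCount (P : ℕ → Prop) (n : ℕ) : ℝ :=
  ((Finset.Icc 1 n).filter P).card / n

/-- `I`-convergence of a real sequence `a` to `L`. -/
def ITendsto (I : Set (Set ℕ)) (a : ℕ → ℝ) (L : ℝ) : Prop :=
  ∀ ε : ℝ, 0 < ε → {n : ℕ | ε ≤ |a n - L|} ∈ I

/-- `ξ` is a rough `I`-statistical limit of `x` with roughness degree `r`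
(the `δ` formulation). -/
def RoughIStatLim {X : Type*} [NormedAddCommGroup X] (I : Set (Set ℕ))
    (x : ℕ → X) (r : ℝ) (ξ : X) : Prop :=
  ∀ ε : ℝ, 0 < ε → ∀ δ : ℝ, 0 < δ →
    {n : ℕ | δ ≤ stCount (fun k => r + ε ≤ ‖x k - ξ‖) n} ∈ I

/-- `ξ` is a rough `I`-statistical limit of `x` with roughness degree `r`
(the `I`-density formulation). -/
def RoughIStatLim' {X : Type*} [NormedAddCommGroup X] (I : Set (Set ℕ))
    (x : ℕ → X) (r : ℝ) (ξ : X) : Prop :=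
  ∀ ε : ℝ, 0 < ε → ITendsto I (stCount (fun k => r + ε ≤ ‖x k - ξ‖)) 0

/-- `x` is `I`-statistically convergent to `ξ`. -/
def IStatConv {X : Type*} [NormedAddCommGroup X] (I : Set (Set ℕ))
    (x : ℕ → X) (ξ : X) : Prop :=
  ∀ ε : ℝ, 0 < ε → ∀ δ : ℝ, 0 < δ →
    {n : ℕ | δ ≤ stCount (fun k => ε ≤ ‖x k - ξ‖) n} ∈ I

/-- `c` is an `I`-statistical cluster point of `x`. -/
def IStatClusterPt {X : Type*} [NormedAddCommGroup X] (I : Set (Set ℕ))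
    (x : ℕ → X) (c : X) : Prop :=
  ∀ ε : ℝ, 0 < ε → ¬ ITendsto I (stCount (fun k => ‖x k - c‖ < ε)) 0

/-- `x` is `I`-statistically bounded. -/
def IStatBounded {X : Type*} [NormedAddCommGroup X] (I : Set (Set ℕ))
    (x : ℕ → X) : Prop :=
  ∃ G : ℝ, 0 < G ∧ ∀ δ : ℝ, 0 < δ →
    {n : ℕ | δ ≤ stCount (fun k => G ≤ ‖x k‖) n} ∈ I

theorem stmt_0 {X : Type*} [NormedAddCommGroup X] [NormedSpace ℝ X]
    (I : Set (Set ℕ)) (hI : IsAdmissibleIdeal I) (x : ℕ → X) (r : ℝ) (hr : 0 ≤ r)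
    (ξ : X) (hx : RoughIStatLim I x r ξ) :
    Metric.diam {y : X | RoughIStatLim I x r y} ≤ 2 * r := by
  obtain ⟨-, huniv, hunion, -, hsing⟩ := hI
  apply Metric.diam_le_of_forall_dist_le (by linarith)
  rintro y hy z hz
  by_contra hlt
  push_neg at hlt
  set d := dist y z with hd
  have hε : (0:ℝ) < (d - 2*r)/3 := by linarith
  set ε := (d - 2*r)/3 with hεdef
  have hA := hy ε hε (1/2) (by norm_num)
  have hB := hz ε hε (1/2) (by norm_num)
  have hmem := hunion _ _ (hunion _ _ hA hB) (hsing 0)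
  have : ∃ n, n ∉ ({n : ℕ | (1:ℝ)/2 ≤ stCount (fun k => r + ε ≤ ‖x k - y‖) n} ∪
      {n : ℕ | (1:ℝ)/2 ≤ stCount (fun k => r + ε ≤ ‖x k - z‖) n}) ∪ {0} := by
    by_contra h
    push_neg at h
    exact huniv (by
      have : ((({n : ℕ | (1:ℝ)/2 ≤ stCount (fun k => r + ε ≤ ‖x k - y‖) n} ∪
        {n : ℕ | (1:ℝ)/2 ≤ stCount (fun k => r + ε ≤ ‖x k - z‖) n}) ∪ {0}) : Set ℕ) = Set.univ :=
        Set.eq_univ_of_forall h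
      rwa [this] at hmem)
  obtain ⟨n, hn⟩ := this
  simp only [Set.mem_union, Set.mem_setOf_eq, Set.mem_singleton_iff, not_or] at hn
  obtain ⟨⟨hny, hnz⟩, hn0⟩ := hn
  push_neg at hny hnz
  have hnpos : (0:ℝ) < n := by
    exact_mod_cast Nat.pos_of_ne_zero hn0
  have hcy : (((Finset.Icc 1 n).filter (fun k => r + ε ≤ ‖x k - y‖)).card : ℝ) < n/2 := by
    have := hny
    rw [stCount, div_lt_iff₀ hnpos] at this
    linarith
  have hcz : (((Finset.Icc 1 n).filter (fun k => r + ε ≤ ‖x k - z‖)).card : ℝ) < n/2 := by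
    have := hnz
    rw [stCount, div_lt_iff₀ hnpos] at this
    linarith
  have hcard : ((Finset.Icc 1 n).card : ℝ) = n := by
    simp [Nat.card_Icc]
  have hsub : (Finset.Icc 1 n).filter (fun k => r + ε ≤ ‖x k - y‖) ∪
      (Finset.Icc 1 n).filter (fun k => r + ε ≤ ‖x k - z‖) ⊂ Finset.Icc 1 n := by
    apply Finset.ssubset_iff_of_subset (Finset.union_subset (Finset.filter_subset _ _)
      (Finset.filter_subset _ _)) |>.mpr
    by_contra h
    push_neg at h
    have hle : Finset.Icc 1 n ⊆ _ := fun k hk => by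
      by_cases hky : k ∈ (Finset.Icc 1 n).filter (fun k => r + ε ≤ ‖x k - y‖) ∪
        (Finset.Icc 1 n).filter (fun k => r + ε ≤ ‖x k - z‖)
      · exact hky
      · exact absurd (h k hk) (by simpa using hky)
    have := Finset.card_le_card hle
    have h2 := Finset.card_union_le ((Finset.Icc 1 n).filter (fun k => r + ε ≤ ‖x k - y‖))
      ((Finset.Icc 1 n).filter (fun k => r + ε ≤ ‖x k - z‖))
    have : ((Finset.Icc 1 n).card : ℝ) ≤
        (((Finset.Icc 1 n).filter (fun k => r + ε ≤ ‖x k - y‖)).card : ℝ) +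
        (((Finset.Icc 1 n).filter (fun k => r + ε ≤ ‖x k - z‖)).card : ℝ) := by
      exact_mod_cast this.trans h2
    rw [hcard] at this
    linarith
  obtain ⟨k, hk, hkn⟩ := Finset.exists_of_ssubset hsub
  simp only [Finset.mem_union, Finset.mem_filter, not_or, not_and] at hkn
  have h1 : ‖x k - y‖ < r + ε := lt_of_not_ge (hkn.1 hk)
  have h2 : ‖x k - z‖ < r + ε := lt_of_not_ge (hkn.2 hk)
  have : d ≤ ‖x k - y‖ + ‖x k - z‖ := by
    rw [hd, dist_eq_norm]
    calc ‖y - z‖ = ‖(x k - z) - (x k - y)‖ := by congr 1; abel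
      _ ≤ ‖x k - z‖ + ‖x k - y‖ := norm_sub_le _ _
      _ = ‖x k - y‖ + ‖x k - z‖ := by ring
  linarith
end

section
/- If a sequence x in a normed linear space X is I-statistically convergent to ξ, then for every r > 0 the set of rough I-statistical limits of x with roughness degree r has diameter exactly 2r. -/
open scoped Classical

lemma stCount_mono {P Q : ℕ → Prop} (h : ∀ k, P k → Q k) (n : ℕ) :
    stCount P n ≤ stCount Q n := by
  unfold stCount
  rcases Nat.eq_zero_or_pos n with rfl | hn
  · simp
  · have hcard : ((Finset.filter P (Finset.Icc 1 n)).card : ℝ) ≤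
        ((Finset.filter Q (Finset.Icc 1 n)).card : ℝ) := by
      exact_mod_cast Finset.card_le_card (Finset.monotone_filter_right _ (fun k _ => h k))
    gcongr

lemma stCount_compl {P : ℕ → Prop} {n : ℕ} (hn : n ≠ 0) :
    stCount (fun k => ¬ P k) n = 1 - stCount P n := by
  have hc : (Finset.Icc 1 n).card = n := by simp
  have hle : (Finset.filter P (Finset.Icc 1 n)).card ≤ n :=
    le_trans (Finset.card_filter_le _ _) (le_of_eq hc)
  have h : (Finset.filter (fun k => ¬ P k) (Finset.Icc 1 n)).card =
      n - (Finset.filter P (Finset.Icc 1 n)).card := by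
    rw [Finset.filter_not, Finset.card_sdiff_of_subset (Finset.filter_subset _ _), hc]
  have key : (Finset.filter (fun k => ¬ P k) (Finset.Icc 1 n)).card +
      (Finset.filter P (Finset.Icc 1 n)).card = n := by omega
  have hn' : (n:ℝ) ≠ 0 := by exact_mod_cast hn
  unfold stCount
  rw [eq_sub_iff_add_eq, ← add_div, div_eq_one_iff_eq hn',
    Finset.filter_congr_decidable]
  exact_mod_cast key

theorem stmt_2 {X : Type*} [NormedAddCommGroup X] [NormedSpace ℝ X] [Nontrivial X]
    (I : Set (Set ℕ)) (hI : IsAdmissibleIdeal I) (x : ℕ → X) (ξ : X)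
    (hx : IStatConv I x ξ) (r : ℝ) (hr : 0 < r) :
    Metric.diam {y : X | RoughIStatLim I x r y} = 2 * r := by
  obtain ⟨hempty, huniv, hunion, hdown, hsingle⟩ := hI
  have hset : {y : X | RoughIStatLim I x r y} = Metric.closedBall ξ r := by
    ext y
    simp only [Set.mem_setOf_eq, Metric.mem_closedBall, dist_eq_norm]
    constructor
    · intro hy
      by_contra hgt
      push_neg at hgt
      set ε : ℝ := (‖y - ξ‖ - r) / 2 with hε_def
      have hε : 0 < ε := by simp only [hε_def]; linarith
      have hnorm : ‖y - ξ‖ = r + 2 * ε := by simp only [hε_def]; ring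
      have hA := hx ε hε (1/2) (by norm_num)
      have hB := hy ε hε (1/2) (by norm_num)
      have hsub : (Set.univ : Set ℕ) ⊆
          ({n : ℕ | (1:ℝ)/2 ≤ stCount (fun k => ε ≤ ‖x k - ξ‖) n} ∪
           {n : ℕ | (1:ℝ)/2 ≤ stCount (fun k => r + ε ≤ ‖x k - y‖) n}) ∪ {0} := by
        intro n _
        rcases Nat.eq_zero_or_pos n with rfl | hn
        · exact Or.inr rfl
        · by_cases hA' : (1:ℝ)/2 ≤ stCount (fun k => ε ≤ ‖x k - ξ‖) n
          · exact Or.inl (Or.inl hA')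
          · left; right
            push_neg at hA'
            have hmono : stCount (fun k => ¬ ε ≤ ‖x k - ξ‖) n ≤
                stCount (fun k => r + ε ≤ ‖x k - y‖) n := by
              apply stCount_mono
              intro k hk
              push_neg at hk
              have h1 : ‖y - ξ‖ ≤ ‖y - x k‖ + ‖x k - ξ‖ := by
                have := norm_add_le (y - x k) (x k - ξ)
                simpa using this
              have h2 : ‖y - x k‖ = ‖x k - y‖ := norm_sub_rev _ _
              linarith [hnorm, h1, h2, hk]
            have hcompl := stCount_compl (P := fun k => ε ≤ ‖x k - ξ‖) (hn.ne')
            simp only [Set.mem_setOf_eq]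
            rw [hcompl] at hmono
            linarith
      exact huniv (hdown _ _ (hunion _ _ (hunion _ _ hA hB) (hsingle 0)) hsub)
    · intro hy ε hε δ hδ
      apply hdown _ _ (hx ε hε δ hδ)
      intro n hn
      simp only [Set.mem_setOf_eq] at hn ⊢
      refine le_trans hn (stCount_mono ?_ n)
      intro k hk
      have h1 : ‖x k - y‖ ≤ ‖x k - ξ‖ + ‖ξ - y‖ := by
        have := norm_add_le (x k - ξ) (ξ - y)
        simpa using this
      have h2 : ‖ξ - y‖ = ‖y - ξ‖ := norm_sub_rev _ _
      linarith
  rw [hset]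
  apply le_antisymm (Metric.diam_closedBall hr.le)
  obtain ⟨v, hv⟩ := exists_ne (0 : X)
  have hv' : 0 < ‖v‖ := norm_pos_iff.mpr hv
  set u : X := (r / ‖v‖) • v with hu
  have hnu : ‖u‖ = r := by
    rw [hu, norm_smul, Real.norm_eq_abs, abs_of_pos (by positivity)]
    field_simp
  have h1 : ξ + u ∈ Metric.closedBall ξ r := by
    rw [Metric.mem_closedBall, dist_eq_norm]
    have : ξ + u - ξ = u := by abel
    rw [this, hnu]
  have h2 : ξ - u ∈ Metric.closedBall ξ r := by
    rw [Metric.mem_closedBall, dist_eq_norm]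
    have : ξ - u - ξ = -u := by abel
    rw [this, norm_neg, hnu]
  have hd : dist (ξ + u) (ξ - u) = 2 * r := by
    rw [dist_eq_norm]
    have : ξ + u - (ξ - u) = (2 : ℝ) • u := by
      rw [two_smul]; abel
    rw [this, norm_smul, hnu]
    norm_num
  calc 2 * r = dist (ξ + u) (ξ - u) := hd.symm
    _ ≤ Metric.diam (Metric.closedBall ξ r) :=
        Metric.dist_le_diam_of_mem Metric.isBounded_closedBall h1 h2
end

section
/- For any sequence x in a normed linear space X and any r > 0, the set of rough I-statistical limits of x with roughness degree r is a closed subset of X. -/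
open scoped Classical

theorem stmt_4 {X : Type*} [NormedAddCommGroup X] [NormedSpace ℝ X]
    (I : Set (Set ℕ)) (hI : IsAdmissibleIdeal I) (x : ℕ → X) (r : ℝ) (hr : 0 < r) :
    IsClosed {ξ : X | RoughIStatLim I x r ξ} := by
  apply isClosed_of_closure_subset
  intro ξ hξ ε hε δ hδ
  obtain ⟨ξ', hξ'S, hd⟩ := Metric.mem_closure_iff.mp hξ (ε/2) (by linarith)
  have hsub : {n : ℕ | δ ≤ stCount (fun k => r + ε ≤ ‖x k - ξ‖) n} ⊆
      {n : ℕ | δ ≤ stCount (fun k => r + ε/2 ≤ ‖x k - ξ'‖) n} := by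
    intro n hn
    refine le_trans hn (stCount_mono (fun k hk => ?_) n)
    have h1 : ‖x k - ξ‖ ≤ ‖x k - ξ'‖ + ‖ξ' - ξ‖ := by
      have := norm_add_le (x k - ξ') (ξ' - ξ)
      simpa using this
    have h2 : ‖ξ' - ξ‖ < ε/2 := by
      rw [dist_eq_norm] at hd
      rw [norm_sub_rev]; linarith
    linarith
  exact hI.2.2.2.1 _ _ (hξ'S (ε/2) (by linarith) δ hδ) hsub
end

section
/- For any sequence x in a normed linear space X and any r > 0, the set of rough I-statistical limits of x with roughness degree r is a convex subset of X. -/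
open scoped Classical

lemma stCount_subadd (P Q R : ℕ → Prop) (h : ∀ k, P k → Q k ∨ R k) (n : ℕ) :
    stCount P n ≤ stCount Q n + stCount R n := by
  unfold stCount
  rw [← add_div]
  rcases Nat.eq_zero_or_pos n with hn | hn
  · simp [hn]
  · apply div_le_div_of_nonneg_right _ (by positivity)
    have hsub : (Finset.Icc 1 n).filter P ⊆
        (Finset.Icc 1 n).filter Q ∪ (Finset.Icc 1 n).filter R := by
      intro k hk
      rw [Finset.mem_filter] at hk
      rcases h k hk.2 with h' | h'
      · exact Finset.mem_union_left _ (Finset.mem_filter.mpr ⟨hk.1, h'⟩)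
      · exact Finset.mem_union_right _ (Finset.mem_filter.mpr ⟨hk.1, h'⟩)
    calc (((Finset.Icc 1 n).filter P).card : ℝ)
        ≤ (((Finset.Icc 1 n).filter Q ∪ (Finset.Icc 1 n).filter R).card : ℝ) := by
          exact_mod_cast Finset.card_le_card hsub
      _ ≤ _ := by exact_mod_cast Finset.card_union_le _ _

theorem stmt_5 {X : Type*} [NormedAddCommGroup X] [NormedSpace ℝ X]
    (I : Set (Set ℕ)) (hI : IsAdmissibleIdeal I) (x : ℕ → X) (r : ℝ) (hr : 0 < r) :
    Convex ℝ {ξ : X | RoughIStatLim I x r ξ} := by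
  intro ξ₀ h₀ ξ₁ h₁ a b ha hb hab
  intro ε hε δ hδ
  obtain ⟨-, -, hUnion, hSub, -⟩ := hI
  have hA := h₀ ε hε (δ/2) (by linarith)
  have hB := h₁ ε hε (δ/2) (by linarith)
  apply hSub _ _ (hUnion _ _ hA hB)
  intro n hn
  simp only [Set.mem_setOf_eq] at hn ⊢
  by_contra hcon
  rw [Set.mem_union] at hcon
  simp only [Set.mem_setOf_eq, not_le, not_or] at hcon
  obtain ⟨hc0, hc1⟩ := hcon
  have key : ∀ k, r + ε ≤ ‖x k - (a • ξ₀ + b • ξ₁)‖ →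
      (r + ε ≤ ‖x k - ξ₀‖) ∨ (r + ε ≤ ‖x k - ξ₁‖) := by
    intro k hk
    by_contra hno
    push_neg at hno
    obtain ⟨hu, hv⟩ := hno
    have heq : x k - (a • ξ₀ + b • ξ₁) = a • (x k - ξ₀) + b • (x k - ξ₁) := by
      rw [smul_sub, smul_sub]
      have : a • x k + b • x k = x k := by
        rw [← add_smul, hab, one_smul]
      abel_nf
      rw [← add_smul, hab, one_smul]
      abel
    rw [heq] at hk
    have hle : ‖a • (x k - ξ₀) + b • (x k - ξ₁)‖ ≤
        a * ‖x k - ξ₀‖ + b * ‖x k - ξ₁‖ := by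
      calc ‖a • (x k - ξ₀) + b • (x k - ξ₁)‖
          ≤ ‖a • (x k - ξ₀)‖ + ‖b • (x k - ξ₁)‖ := norm_add_le _ _
        _ = a * ‖x k - ξ₀‖ + b * ‖x k - ξ₁‖ := by
            rw [norm_smul, norm_smul, Real.norm_eq_abs, Real.norm_eq_abs,
              abs_of_nonneg ha, abs_of_nonneg hb]
    rcases lt_or_ge 0 a with hpa | hpa
    · nlinarith [mul_nonneg hb (norm_nonneg (x k - ξ₁))]
    · have hb1 : b = 1 := by linarith
      have ha0 : a = 0 := by linarith
      nlinarith
  have := stCount_subadd _ _ _ key n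
  linarith
end

section
/- Let x be a sequence in a normed linear space X and c an I-statistical cluster point of x. Then for every rough I-statistical limit ξ of x with degree r, ‖ξ − c‖ ≤ r. -/
open scoped Classical

theorem stmt_8 {X : Type*} [NormedAddCommGroup X] [NormedSpace ℝ X]
    (I : Set (Set ℕ)) (hI : IsAdmissibleIdeal I) (x : ℕ → X) (r : ℝ) (hr : 0 ≤ r)
    (c : X) (hc : IStatClusterPt I x c) (ξ : X) (hξ : RoughIStatLim' I x r ξ) :
    ‖ξ - c‖ ≤ r := by
  by_contra h
  push_neg at h
  set ε : ℝ := (‖ξ - c‖ - r) / 2 with hε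
  have hεpos : 0 < ε := by rw [hε]; linarith
  refine hc ε hεpos ?_
  intro ε' hε'
  refine hI.2.2.2.1 _ _ (hξ ε hεpos ε' hε') ?_
  intro n hn
  simp only [Set.mem_setOf_eq, sub_zero] at hn ⊢
  have hcard : stCount (fun k => ‖x k - c‖ < ε) n ≤
      stCount (fun k => r + ε ≤ ‖x k - ξ‖) n := by
    unfold stCount
    gcongr
    intro hk
    have htri : ‖ξ - c‖ ≤ ‖x k - ξ‖ + ‖x k - c‖ := by
      calc ‖ξ - c‖ = ‖(ξ - x k) + (x k - c)‖ := by rw [sub_add_sub_cancel]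
        _ ≤ ‖ξ - x k‖ + ‖x k - c‖ := norm_add_le _ _
        _ = ‖x k - ξ‖ + ‖x k - c‖ := by rw [norm_sub_rev]
    have : r + ε = ‖ξ - c‖ - ε := by rw [hε]; ring
    rw [this]
    linarith
  have h1 : |stCount (fun k => ‖x k - c‖ < ε) n| =
      stCount (fun k => ‖x k - c‖ < ε) n := by
    apply abs_of_nonneg; unfold stCount; positivity
  have h2 : 0 ≤ stCount (fun k => r + ε ≤ ‖x k - ξ‖) n := by
    unfold stCount; positivity
  rw [h1] at hn
  calc ε' ≤ _ := hn
    _ ≤ _ := hcard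
    _ ≤ |stCount (fun k => r + ε ≤ ‖x k - ξ‖) n| := le_abs_self _
end

section
/- A sequence x in a normed linear space X is I-statistically bounded if and only if there exists r > 0 such that the rough I-statistical limit set of x with degree r is nonempty. -/
open scoped Classical

theorem stmt_9 {X : Type*} [NormedAddCommGroup X] [NormedSpace ℝ X]
    (I : Set (Set ℕ)) (hI : IsAdmissibleIdeal I) (x : ℕ → X) :
    IStatBounded I x ↔ ∃ r : ℝ, 0 < r ∧ ∃ ξ : X, RoughIStatLim I x r ξ := by
  obtain ⟨_, _, _, hsub, _⟩ := hI
  constructor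
  · rintro ⟨G, hG, hGI⟩
    refine ⟨G, hG, 0, fun ε hε δ hδ => ?_⟩
    refine hsub _ _ (hGI δ hδ) ?_
    intro n hn
    refine le_trans hn (stCount_mono (fun k hk => ?_) n)
    simp only [sub_zero] at hk
    linarith
  · rintro ⟨r, hr, ξ, hξ⟩
    refine ⟨r + 1 + ‖ξ‖, by positivity, fun δ hδ => ?_⟩
    refine hsub _ _ (hξ 1 one_pos δ hδ) ?_
    intro n hn
    refine le_trans hn (stCount_mono (fun k hk => ?_) n)
    have := norm_sub_norm_le (x k) ξ
    linarith
end

section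
/- Let x be the real sequence defined by x_k = (−1)^k for k ∉ A and x_k = k for k ∈ A, where A ∈ I is an infinite set with I-natural density zero. Then for r ≥ 1, the interval [1 − r, r − 1] is contained in the rough I-statistical limit set of x with degree r. -/
open scoped Classical

theorem stmt_16 (I : Set (Set ℕ)) (hI : IsAdmissibleIdeal I) (A : Set ℕ)
    (hA : A ∈ I) (hAinf : A.Infinite)
    (hd : ITendsto I (stCount (fun k => k ∈ A)) 0)
    (x : ℕ → ℝ) (hx : ∀ k : ℕ, x k = if k ∈ A then (k : ℝ) else (-1 : ℝ) ^ k)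
    (r : ℝ) (hr : 1 ≤ r) :
    ∀ ξ ∈ Set.Icc (1 - r) (r - 1), RoughIStatLim I x r ξ := by
  rintro ξ ⟨hξ1, hξ2⟩ ε hε δ hδ
  obtain ⟨-, -, -, hsub, -⟩ := hI
  apply hsub _ _ (hd δ hδ)
  intro n hn
  simp only [Set.mem_setOf_eq] at hn ⊢
  have himp : ∀ k : ℕ, r + ε ≤ ‖x k - ξ‖ → k ∈ A := by
    intro k hk
    by_contra hkA
    rw [hx k, if_neg hkA] at hk
    have h1 : ‖(-1 : ℝ) ^ k - ξ‖ ≤ 1 + |ξ| := by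
      calc ‖(-1 : ℝ) ^ k - ξ‖ ≤ ‖(-1 : ℝ) ^ k‖ + ‖ξ‖ := norm_sub_le _ _
        _ ≤ 1 + |ξ| := by
            rw [Real.norm_eq_abs, abs_pow, abs_neg, abs_one, one_pow]; rfl
    have h2 : |ξ| ≤ r - 1 := abs_le.mpr ⟨by linarith, hξ2⟩
    linarith
  have hcard : ((Finset.Icc 1 n).filter (fun k => r + ε ≤ ‖x k - ξ‖)).card
      ≤ ((Finset.Icc 1 n).filter (fun k => k ∈ A)).card := by
    apply Finset.card_le_card
    intro k hk
    rw [Finset.mem_filter] at hk ⊢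
    exact ⟨hk.1, himp k hk.2⟩
  have hmono : stCount (fun k => r + ε ≤ ‖x k - ξ‖) n ≤ stCount (fun k => k ∈ A) n := by
    unfold stCount
    gcongr
  rw [sub_zero, abs_of_nonneg (by unfold stCount; positivity)]
  exact hn.trans hmono
end

section
/- Let x be the real sequence defined by x_k = (−1)^k for k ∉ A and x_k = k for k ∈ A, where A ∈ I is an infinite set with I-natural density zero. Then for 0 ≤ r < 1, the rough I-statistical limit set of x with degree r is empty. -/
open scoped Classical

lemma parity_count_aux (m : ℕ) (hm : m < 2) (n : ℕ) :
    n ≤ 2 * ((Finset.Icc 1 n).filter (fun k => k % 2 = m)).card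
      + (if n % 2 = m then 0 else 1) := by
  induction n with
  | zero => split <;> simp
  | succ n ih =>
    rw [← Finset.insert_Icc_right_eq_Icc_add_one (by omega)]
    rw [Finset.filter_insert]
    by_cases h : (n+1) % 2 = m
    · rw [if_pos h, Finset.card_insert_of_notMem (by simp)]
      have : ¬ (n % 2 = m) := by omega
      rw [if_neg this] at ih
      rw [if_pos h]
      omega
    · rw [if_neg h]
      have hn : n % 2 = m := by omega
      rw [if_pos hn] at ih
      rw [if_neg h]
      omega

lemma parity_count (m : ℕ) (hm : m < 2) (n : ℕ) :
    n ≤ 2 * ((Finset.Icc 1 n).filter (fun k => k % 2 = m)).card + 1 := by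
  have := parity_count_aux m hm n
  split at this <;> omega

theorem stmt_17 (I : Set (Set ℕ)) (hI : IsAdmissibleIdeal I) (A : Set ℕ)
    (hA : A ∈ I) (hAinf : A.Infinite)
    (hd : ITendsto I (stCount (fun k => k ∈ A)) 0)
    (x : ℕ → ℝ) (hx : ∀ k : ℕ, x k = if k ∈ A then (k : ℝ) else (-1 : ℝ) ^ k)
    (r : ℝ) (hr0 : 0 ≤ r) (hr : r < 1) :
    {ξ : ℝ | RoughIStatLim I x r ξ} = ∅ := by
  ext xi
  simp only [Set.mem_setOf_eq, Set.mem_empty_iff_false, iff_false]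
  intro hxi
  -- choose b = ±1 with 1 ≤ |b - xi| and the matching parity m
  obtain ⟨b, m, hm2, hb, hbm⟩ :
      ∃ (b : ℝ) (m : ℕ), m < 2 ∧ 1 ≤ |b - xi| ∧
        ∀ k : ℕ, k % 2 = m → ((-1 : ℝ)) ^ k = b := by
    by_cases h : 1 ≤ |1 - xi|
    · exact ⟨1, 0, by omega, h, fun k hk => by
        rw [(Nat.even_iff.2 hk).neg_one_pow]⟩
    · refine ⟨-1, 1, by omega, ?_, fun k hk => by
        rw [(Nat.odd_iff.2 hk).neg_one_pow]⟩
      push_neg at h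
      have h3 : (2:ℝ) = |(1 - xi) + (xi + 1)| := by rw [show (1 - xi) + (xi + 1) = (2:ℝ) by ring]; norm_num
      have h4 := abs_add_le (1 - xi) (xi + 1)
      have h5 : |xi + 1| = |-1 - xi| := by
        rw [show (-1:ℝ) - xi = -(xi+1) by ring, abs_neg]
      linarith
  set P : ℕ → Prop := fun k => r + (1 - r) ≤ ‖x k - xi‖ with hP
  have h1 : {n : ℕ | (1/4 : ℝ) ≤ stCount P n} ∈ I :=
    hxi (1 - r) (by linarith) (1/4) (by norm_num)
  have h2 : {n : ℕ | (1/8 : ℝ) ≤ |stCount (fun k => k ∈ A) n - 0|} ∈ I :=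
    hd (1/8) (by norm_num)
  -- key pointwise estimate
  have key : ∀ n : ℕ, 4 ≤ n → ¬ ((1/8 : ℝ) ≤ |stCount (fun k => k ∈ A) n - 0|) →
      (1/4 : ℝ) ≤ stCount P n := by
    intro n hn4 hA8
    have hn0 : (0 : ℝ) < n := by positivity
    have hAnn : (0:ℝ) ≤ stCount (fun k => k ∈ A) n := by
      unfold stCount; positivity
    have hA8' : stCount (fun k => k ∈ A) n < 1/8 := by
      rw [sub_zero, abs_of_nonneg hAnn] at hA8; linarith [not_le.1 hA8]
    -- counting
    set cP := ((Finset.Icc 1 n).filter P).card with hcP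
    set cA := ((Finset.Icc 1 n).filter (fun k => k ∈ A)).card with hcA
    set cM := ((Finset.Icc 1 n).filter (fun k => k % 2 = m)).card with hcM
    have hsub : (Finset.Icc 1 n).filter (fun k => k % 2 = m)
        ⊆ (Finset.Icc 1 n).filter P ∪ (Finset.Icc 1 n).filter (fun k => k ∈ A) := by
      intro k hk
      rw [Finset.mem_filter] at hk
      by_cases hkA : k ∈ A
      · exact Finset.mem_union_right _ (Finset.mem_filter.2 ⟨hk.1, hkA⟩)
      · refine Finset.mem_union_left _ (Finset.mem_filter.2 ⟨hk.1, ?_⟩)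
        have : x k = (-1 : ℝ) ^ k := by rw [hx k, if_neg hkA]
        rw [hP]
        simp only [Real.norm_eq_abs]
        rw [this, hbm k hk.2]
        linarith [hb]
    have hcMle : cM ≤ cP + cA := by
      calc cM ≤ ((Finset.Icc 1 n).filter P ∪ (Finset.Icc 1 n).filter (fun k => k ∈ A)).card :=
            Finset.card_le_card hsub
        _ ≤ cP + cA := Finset.card_union_le _ _
    have hpar : n ≤ 2 * cM + 1 := parity_count m hm2 n
    have hnat : n ≤ 2 * cP + 2 * cA + 1 := by omega
    have hAval : stCount (fun k => k ∈ A) n = (cA : ℝ) / n := rfl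
    have hPval : stCount P n = (cP : ℝ) / n := rfl
    rw [hAval, div_lt_iff₀ hn0] at hA8'
    rw [hPval, le_div_iff₀ hn0]
    have hcast : (n : ℝ) ≤ 2 * cP + 2 * cA + 1 := by exact_mod_cast hnat
    have hn4' : (4 : ℝ) ≤ n := by exact_mod_cast hn4
    nlinarith [hcast, hA8', hn4']
  -- cover ℕ
  obtain ⟨hemp, huniv, hun, hsub, hsing⟩ := hI
  have hfin : ({0, 1, 2, 3} : Set ℕ) ∈ I := by
    have h0 := hsing 0; have h1' := hsing 1; have h2' := hsing 2; have h3 := hsing 3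
    have := hun _ _ (hun _ _ (hun _ _ h0 h1') h2') h3
    convert this using 1
    ext k; simp [Set.mem_insert_iff]; tauto
  have hcover : (Set.univ : Set ℕ) ⊆
      ({n : ℕ | (1/4 : ℝ) ≤ stCount P n} ∪
       {n : ℕ | (1/8 : ℝ) ≤ |stCount (fun k => k ∈ A) n - 0|}) ∪
      ({0, 1, 2, 3} : Set ℕ) := by
    intro n _
    by_cases hn4 : 4 ≤ n
    · by_cases hA8 : (1/8 : ℝ) ≤ |stCount (fun k => k ∈ A) n - 0|
      · exact Or.inl (Or.inr hA8)
      · exact Or.inl (Or.inl (key n hn4 hA8))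
    · right; interval_cases n <;> simp
  exact huniv (hsub _ _ (hun _ _ (hun _ _ h1 h2) hfin) hcover)
end
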